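/- Let I be a set with a transitive well-founded relation ≺, let Z be a category with a functor Φ : Z → I (viewing the poset (I, ⪯) as a category). Suppose F assigns to each x ∈ I and each section G_x : {y | y ≺ x} → Z of Φ (a functor with Φ ∘ G_x the inclusion) an extension of G_x to a section defined on {y | y ⪯ x}. Then there exists a unique section G : I → Z of Φ such that for every x, the restriction of G to {y | y ⪯ x} equals F(x, G restricted to {y | y ≺ x}). -/

import Mathlib

open CategoryTheory

universe w v u

section StmtAux
variable {I : Type u} [PartialOrder I] {Z : Type w} [Category.{v} Z]

instance instSubFS (p : I → Prop) (X Y : ObjectProperty.FullSubcategory p) : Subsingleton (X ⟶ Y) :=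
  ⟨fun f g => InducedCategory.hom_ext (Subsingleton.elim _ _)⟩

instance instSubI (x y : I) : Subsingleton (x ⟶ y) :=
  inferInstanceAs (Subsingleton (ULift (PLift _)))

@[reducible] def resLE {x y : I} (h : y ≤ x) (G : ObjectProperty.FullSubcategory (· ≤ x) ⥤ Z) :
    ObjectProperty.FullSubcategory (· ≤ y) ⥤ Z :=
  ObjectProperty.ιOfLE (fun z (hz : z ≤ y) => le_trans hz h) ⋙ G

def resLT {x : I} (G : ObjectProperty.FullSubcategory (· ≤ x) ⥤ Z) :
    ObjectProperty.FullSubcategory (· < x) ⥤ Z :=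
  ObjectProperty.ιOfLE (fun z (hz : z < x) => le_of_lt hz) ⋙ G

def fsHom {x : I} {y z : I} (hy : y ≤ x) (hz : z ≤ x) (h : y ≤ z) :
    (⟨y, hy⟩ : ObjectProperty.FullSubcategory (· ≤ x)) ⟶ ⟨z, hz⟩ := ObjectProperty.homMk (homOfLE h)

lemma comp_aux {C : Type*} [Category C] [∀ X Y : C, Subsingleton (X ⟶ Y)]
    (B : C ⥤ Z) {a a' b : C}
    (ha : a = a') (u : a ⟶ b) (v : a' ⟶ b) {c : Z} (e : c = B.obj a) (e' : c = B.obj a') :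
    eqToHom e ≫ B.map u = eqToHom e' ≫ B.map v := by
  subst ha; rw [Subsingleton.elim u v]

lemma comp_aux2 {C : Type*} [Category C] [∀ X Y : C, Subsingleton (X ⟶ Y)]
    (B : C ⥤ Z) {a a' b b' : C}
    (ha : a = a') (hb : b = b') (u : a ⟶ b) (v : a' ⟶ b') {c d : Z}
    (e : c = B.obj a) (e' : c = B.obj a') (g : B.obj b = d) (g' : B.obj b' = d) :
    eqToHom e ≫ B.map u ≫ eqToHom g = eqToHom e' ≫ B.map v ≫ eqToHom g' := by
  subst ha; subst hb; rw [Subsingleton.elim u v]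

variable (p : I → Prop) (A : ∀ y, p y → (ObjectProperty.FullSubcategory (· ≤ y) ⥤ Z))

@[reducible] def Compat : Prop := ∀ y (hy : p y) z (hz : p z) (h : z ≤ y), resLE h (A y hy) = A z hz

@[reducible] def glueObj (y : I) (hy : p y) : Z := (A y hy).obj ⟨y, le_refl y⟩

lemma glue_eObj (compat : Compat p A) {x y : I} (hx : p x) (hy : p y) (h : x ≤ y) :
    (A y hy).obj ⟨x, h⟩ = glueObj p A x hx :=
  Functor.congr_obj (compat y hy x hx h) ⟨x, le_refl x⟩

def glueMap (compat : Compat p A) {X Y : ObjectProperty.FullSubcategory p} (f : X ⟶ Y) :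
    glueObj p A X.obj X.2 ⟶ glueObj p A Y.obj Y.2 :=
  eqToHom (glue_eObj p A compat X.2 Y.2 (leOfHom f.hom)).symm ≫
    (A Y.obj Y.2).map (fsHom (leOfHom f.hom) (le_refl _) (leOfHom f.hom))

lemma glueMap_id (compat : Compat p A) (X : ObjectProperty.FullSubcategory p) :
    glueMap p A compat (𝟙 X) = 𝟙 _ := by
  unfold glueMap
  rw [show fsHom (leOfHom (InducedCategory.Hom.hom (𝟙 X))) (le_refl _) (leOfHom (InducedCategory.Hom.hom (𝟙 X))) = 𝟙 _ from Subsingleton.elim _ _,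
    CategoryTheory.Functor.map_id, Category.comp_id]
  rfl

lemma glueMap_comp (compat : Compat p A) {X Y W : ObjectProperty.FullSubcategory p} (f : X ⟶ Y) (g : Y ⟶ W) :
    glueMap p A compat (f ≫ g) = glueMap p A compat f ≫ glueMap p A compat g := by
  unfold glueMap
  have hc := Functor.congr_hom (compat W.obj W.2 Y.obj Y.2 (leOfHom g.hom)).symm
    (fsHom (leOfHom f.hom) (le_refl _) (leOfHom f.hom))
  dsimp [resLE, ObjectProperty.ιOfLE] at hc
  rw [hc]
  simp only [Category.assoc, eqToHom_trans, eqToHom_trans_assoc, eqToHom_refl,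
    Category.id_comp, Category.comp_id]
  rw [← Functor.map_comp]
  exact comp_aux (A W.obj W.2) rfl _ _ _ _

def glueFun (compat : Compat p A) : ObjectProperty.FullSubcategory p ⥤ Z where
  obj X := glueObj p A X.obj X.2
  map f := glueMap p A compat f
  map_id := glueMap_id p A compat
  map_comp := glueMap_comp p A compat

lemma glue_res (compat : Compat p A) (y : I) (hy : p y) (q : ∀ ⦃z⦄, z ≤ y → p z) :
    ObjectProperty.ιOfLE (fun z hz => q hz) ⋙ glueFun p A compat = A y hy := by
  refine CategoryTheory.Functor.ext (fun X => (glue_eObj p A compat (q X.2) hy X.2).symm) (fun X X' f => ?_)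
  have hc := Functor.congr_hom (compat y hy X'.obj (q X'.2) X'.2).symm
    (fsHom (leOfHom f.hom) (le_refl _) (leOfHom f.hom))
  dsimp [resLE, ObjectProperty.ιOfLE] at hc
  show glueMap p A compat ((ObjectProperty.ιOfLE (fun z hz => q hz)).map f) = _
  unfold glueMap
  dsimp only [ObjectProperty.ιOfLE]
  rw [hc]
  simp only [Category.assoc, eqToHom_trans, eqToHom_trans_assoc, eqToHom_refl,
    Category.id_comp, Category.comp_id]
  exact comp_aux2 (A y hy) rfl rfl _ _ _ _ _ _

lemma glue_sec (compat : Compat p A) (Φ : Z ⥤ I)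
    (hA : ∀ y (hy : p y), A y hy ⋙ Φ = ObjectProperty.ι (· ≤ y)) :
    glueFun p A compat ⋙ Φ = ObjectProperty.ι p := by
  refine CategoryTheory.Functor.ext
    (fun X => Functor.congr_obj (hA X.obj X.2) ⟨X.obj, le_refl _⟩) (fun X Y f => ?_)
  apply Subsingleton.elim

lemma glue_unique (compat : Compat p A) (pdc : ∀ ⦃z y⦄, z ≤ y → p y → p z)
    (B : ObjectProperty.FullSubcategory p ⥤ Z)
    (hB : ∀ y (hy : p y), ObjectProperty.ιOfLE (fun z hz => pdc hz hy) ⋙ B = A y hy) :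
    B = glueFun p A compat := by
  refine CategoryTheory.Functor.ext (fun X => Functor.congr_obj (hB X.obj X.2) ⟨X.obj, le_refl _⟩)
    (fun X Y f => ?_)
  have hc := Functor.congr_hom (hB Y.obj Y.2)
    (fsHom (leOfHom f.hom) (le_refl _) (leOfHom f.hom))
  dsimp [ObjectProperty.ιOfLE] at hc
  rw [show f = (ObjectProperty.homMk (fsHom (x := Y.obj) (leOfHom f.hom) (le_refl _) (leOfHom f.hom)).hom : X ⟶ Y)
    from Subsingleton.elim _ _] at *
  rw [hc]
  dsimp only [glueFun]
  unfold glueMap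
  simp only [Category.assoc, eqToHom_trans, eqToHom_trans_assoc, eqToHom_refl,
    Category.id_comp, Category.comp_id]

variable (Phi : Z ⥤ I)
  (F : ∀ x : I, (ObjectProperty.FullSubcategory (· < x) ⥤ Z) → (ObjectProperty.FullSubcategory (· ≤ x) ⥤ Z))
  (hwf : WellFounded ((· < ·) : I → I → Prop))

def GoodP : ∀ x : I, (ObjectProperty.FullSubcategory (· ≤ x) ⥤ Z) → Prop :=
  hwf.fix (fun x rec G =>
    (G ⋙ Phi = ObjectProperty.ι (· ≤ x)) ∧
    G = F x (resLT G) ∧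
    ∀ y (h : y < x), rec y h (resLE h.le G))

lemma GoodP_iff (x : I) (G : ObjectProperty.FullSubcategory (· ≤ x) ⥤ Z) :
    GoodP Phi F hwf x G ↔
      (G ⋙ Phi = ObjectProperty.ι (· ≤ x)) ∧
      G = F x (resLT G) ∧
      ∀ y (h : y < x), GoodP Phi F hwf y (resLE h.le G) := by
  unfold GoodP
  rw [WellFounded.fix_eq]

lemma goodEU
    (hFsec : ∀ (x : I) (Gx : ObjectProperty.FullSubcategory (· < x) ⥤ Z),
      Gx ⋙ Phi = ObjectProperty.ι (· < x) →
      F x Gx ⋙ Phi = ObjectProperty.ι (· ≤ x))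
    (hFres : ∀ (x : I) (Gx : ObjectProperty.FullSubcategory (· < x) ⥤ Z),
      Gx ⋙ Phi = ObjectProperty.ι (· < x) →
      ObjectProperty.ιOfLE (fun y (h : y < x) => le_of_lt h) ⋙ F x Gx = Gx) :
    ∀ x : I, ∃! G : ObjectProperty.FullSubcategory (· ≤ x) ⥤ Z, GoodP Phi F hwf x G := by
  intro x
  induction x using WellFounded.induction hwf with
  | _ x IH =>
  set A' : ∀ y, y < x → (ObjectProperty.FullSubcategory (· ≤ y) ⥤ Z) := fun y h => (IH y h).choose with hA'def
  have hA' : ∀ y h, GoodP Phi F hwf y (A' y h) := fun y h => (IH y h).choose_spec.1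
  have hA'u : ∀ y h G, GoodP Phi F hwf y G → G = A' y h :=
    fun y h G hG => (IH y h).choose_spec.2 G hG
  have compat : Compat (· < x) A' := by
    intro y hy z hz h
    refine (hA'u z hz _ ?_).symm.symm
    rcases eq_or_lt_of_le h with rfl | hlt
    · exact hA' z hy
    · exact ((GoodP_iff Phi F hwf y _).1 (hA' y hy)).2.2 z hlt
  have hsecGlt : glueFun _ A' compat ⋙ Phi = ObjectProperty.ι (· < x) :=
    glue_sec _ _ compat Phi (fun y hy => ((GoodP_iff Phi F hwf y _).1 (hA' y hy)).1)
  have hresGx : resLT (F x (glueFun _ A' compat)) = glueFun _ A' compat :=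
    hFres x _ hsecGlt
  have hGx : GoodP Phi F hwf x (F x (glueFun _ A' compat)) := by
    rw [GoodP_iff]
    refine ⟨hFsec x _ hsecGlt, by rw [hresGx], ?_⟩
    intro y h
    have e1 : resLE h.le (F x (glueFun _ A' compat)) =
        ObjectProperty.ιOfLE (fun z (hz : z ≤ y) => lt_of_le_of_lt hz h) ⋙
          resLT (F x (glueFun _ A' compat)) := rfl
    have : resLE h.le (F x (glueFun _ A' compat)) = A' y h := by
      rw [e1, hresGx]
      exact glue_res _ _ compat y h (fun z hz => lt_of_le_of_lt hz h)
    rw [this]; exact hA' y h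
  refine ⟨F x (glueFun _ A' compat), hGx, ?_⟩
  intro G' hG'
  obtain ⟨h1, h2, h3⟩ := (GoodP_iff Phi F hwf x _).1 hG'
  have hres : resLT G' = glueFun _ A' compat := by
    refine glue_unique _ _ compat (fun z y hz hy => lt_of_le_of_lt hz hy) _ ?_
    intro y hy
    exact hA'u y hy _ (h3 y hy)
  rw [h2, hres]

def toTrue : I ⥤ ObjectProperty.FullSubcategory (fun _ : I => True) :=
  ObjectProperty.lift _ (𝟭 I) (fun _ => trivial)

include hwf in
theorem stmt15'
    (hFsec : ∀ (x : I) (Gx : ObjectProperty.FullSubcategory (· < x) ⥤ Z),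
      Gx ⋙ Phi = ObjectProperty.ι (· < x) →
      F x Gx ⋙ Phi = ObjectProperty.ι (· ≤ x))
    (hFres : ∀ (x : I) (Gx : ObjectProperty.FullSubcategory (· < x) ⥤ Z),
      Gx ⋙ Phi = ObjectProperty.ι (· < x) →
      ObjectProperty.ιOfLE (fun y (h : y < x) => le_of_lt h) ⋙ F x Gx = Gx) :
    ∃! G : I ⥤ Z, G ⋙ Phi = 𝟭 I ∧
      ∀ x : I, ObjectProperty.ι (· ≤ x) ⋙ G =
        F x (ObjectProperty.ι (· < x) ⋙ G) := by
  have hEU := goodEU Phi F hwf hFsec hFres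
  set AA : ∀ y : I, (fun _ : I => True) y → (ObjectProperty.FullSubcategory (· ≤ y) ⥤ Z) :=
    fun y _ => (hEU y).choose with hAAdef
  have hAA : ∀ y, GoodP Phi F hwf y (AA y trivial) := fun y => (hEU y).choose_spec.1
  have hAAu : ∀ y G, GoodP Phi F hwf y G → G = AA y trivial :=
    fun y G hG => (hEU y).choose_spec.2 G hG
  have compat : Compat (fun _ : I => True) AA := by
    intro y hy z hz h
    refine (hAAu z _ ?_).symm.symm
    rcases eq_or_lt_of_le h with rfl | hlt
    · exact hAA z
    · exact ((GoodP_iff Phi F hwf y _).1 (hAA y)).2.2 z hlt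
  refine ⟨toTrue ⋙ glueFun _ AA compat, ⟨?_, ?_⟩, ?_⟩
  · have h1 : glueFun _ AA compat ⋙ Phi = ObjectProperty.ι (fun _ : I => True) :=
      glue_sec _ _ compat Phi (fun y hy => ((GoodP_iff Phi F hwf y _).1 (hAA y)).1)
    show toTrue ⋙ (glueFun _ AA compat ⋙ Phi) = 𝟭 I
    rw [h1]
    rfl
  · intro x
    have hres : ObjectProperty.ι (· ≤ x) ⋙ (toTrue ⋙ glueFun _ AA compat) =
        AA x trivial := glue_res _ _ compat x trivial (fun z _ => trivial)
    rw [hres]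
    have h2 := ((GoodP_iff Phi F hwf x _).1 (hAA x)).2.1
    have h3 : ObjectProperty.ι (· < x) ⋙ (toTrue ⋙ glueFun _ AA compat) =
        resLT (AA x trivial) := by
      show ObjectProperty.ιOfLE (fun z (hz : z < x) => le_of_lt hz) ⋙
        (ObjectProperty.ι (· ≤ x) ⋙ (toTrue ⋙ glueFun _ AA compat)) = _
      rw [hres]
      rfl
    rw [h3]
    exact h2
  · intro G' ⟨hsec, hcond⟩
    have hGood : ∀ x, GoodP Phi F hwf x (ObjectProperty.ι (· ≤ x) ⋙ G') := by
      intro x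
      induction x using WellFounded.induction hwf with
      | _ x IH =>
      rw [GoodP_iff]
      refine ⟨?_, hcond x, ?_⟩
      · show ObjectProperty.ι (· ≤ x) ⋙ (G' ⋙ Phi) = _
        rw [hsec]
        rfl
      · intro y h
        exact IH y h
    have hB : ∀ x, ObjectProperty.ι (· ≤ x) ⋙ G' = AA x trivial :=
      fun x => hAAu x _ (hGood x)
    have : ObjectProperty.ι (fun _ : I => True) ⋙ G' = glueFun _ AA compat := by
      refine glue_unique _ _ compat (fun z y _ _ => trivial) _ ?_
      intro y hy
      exact hB y
    show toTrue ⋙ (ObjectProperty.ι (fun _ : I => True) ⋙ G') = _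
    rw [this]

end StmtAux

/-- well-founded recursion for sections of a functor `Φ : Z ⥤ I`
over a well-founded poset `I`.  Given, for each `x`, an operation `F x` turning
a section of `Φ` over the strict slice `{y | y < x}` into an extension over
`{y | y ≤ x}`, there is a unique section `G : I ⥤ Z` of `Φ` whose restriction
to each `{y | y ≤ x}` is obtained by applying `F x` to its restriction to
`{y | y < x}`. -/
theorem stmt15 {I : Type u} [PartialOrder I]
    (hwf : WellFounded ((· < ·) : I → I → Prop))
    {Z : Type w} [Category.{v} Z] (Φ : Z ⥤ I)
    (F : ∀ x : I, (ObjectProperty.FullSubcategory (· < x) ⥤ Z) → (ObjectProperty.FullSubcategory (· ≤ x) ⥤ Z))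
    -- `F x` produces sections of `Φ` ...
    (hFsec : ∀ (x : I) (Gx : ObjectProperty.FullSubcategory (· < x) ⥤ Z),
      Gx ⋙ Φ = ObjectProperty.ι (· < x) →
      F x Gx ⋙ Φ = ObjectProperty.ι (· ≤ x))
    -- ... extending the given partial section
    (hFres : ∀ (x : I) (Gx : ObjectProperty.FullSubcategory (· < x) ⥤ Z),
      Gx ⋙ Φ = ObjectProperty.ι (· < x) →
      ObjectProperty.ιOfLE (fun y (h : y < x) => le_of_lt h) ⋙ F x Gx = Gx) :
    ∃! G : I ⥤ Z, G ⋙ Φ = 𝟭 I ∧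
      ∀ x : I, ObjectProperty.ι (· ≤ x) ⋙ G =
        F x (ObjectProperty.ι (· < x) ⋙ G) := by
  exact stmt15' Φ F hwf hFsec hFres
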